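/- Let Φ = (Φ₁, Φ₂) ∈ ℂ²⊗L²(ℝ) be an eigenvector of Q(α,β) (α,β>0, αβ>1) where both components Φ₁, Φ₂ are odd functions. Define Φ̃_j(x) = Φ_j(x) for x ≥ 0 and Φ̃_j(x) = −Φ_j(x) for x < 0. Then Φ̃ = (Φ̃₁, Φ̃₂) lies in the form domain of Q, ‖Φ̃‖ = ‖Φ‖, and ⟨Φ̃, Q Φ̃⟩ = ⟨Φ, Q Φ⟩. Consequently, the lowest eigenvalue E₊ of the even part of Q satisfies E₊ ≤ E₋, the lowest eigenvalue of the odd part. -/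

import Mathlib

open MeasureTheory

noncomputable def Qact (α β : ℝ) (u : (ℝ → ℂ) × (ℝ → ℂ)) : (ℝ → ℂ) × (ℝ → ℂ) :=
  (fun x => (α : ℂ) * (-(1/2) * deriv (deriv u.1) x + (1/2) * (x : ℂ) ^ 2 * u.1 x)
      - ((x : ℂ) * deriv u.2 x + (1/2) * u.2 x),
   fun x => (β : ℂ) * (-(1/2) * deriv (deriv u.2) x + (1/2) * (x : ℂ) ^ 2 * u.2 x)
      + ((x : ℂ) * deriv u.1 x + (1/2) * u.1 x))

/-- Even reflection `Φ̃(x) = Φ(x)` for `x ≥ 0`, `Φ̃(x) = -Φ(x)` for `x < 0`. -/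
noncomputable def reflect (f : ℝ → ℂ) : ℝ → ℂ := fun x => if 0 ≤ x then f x else -f x

/-- `(u, g)` belongs to the form domain data of `Q`: `u`, its weak derivative `g`,
and `x·u` are square integrable and `u` is absolutely continuous with derivative `g`. -/
def FormPair (u g : ℝ → ℂ) : Prop :=
  MemLp u 2 (volume : Measure ℝ) ∧ MemLp g 2 (volume : Measure ℝ) ∧
  MemLp (fun x : ℝ => (x : ℂ) * u x) 2 (volume : Measure ℝ) ∧
  ∀ x : ℝ, u x = u 0 + ∫ t in (0 : ℝ)..x, g t

/-- The quadratic form of `Q(α,β)` evaluated on `(u₁,u₂)` with derivatives `(g₁,g₂)`. -/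
noncomputable def Qform (α β : ℝ) (u₁ u₂ g₁ g₂ : ℝ → ℂ) : ℝ :=
  ∫ x : ℝ,
    (α * ((1/2) * ‖g₁ x‖ ^ 2 + (1/2) * x ^ 2 * ‖u₁ x‖ ^ 2)
      + β * ((1/2) * ‖g₂ x‖ ^ 2 + (1/2) * x ^ 2 * ‖u₂ x‖ ^ 2)
      + (-((starRingEnd ℂ) (u₁ x)) * ((x : ℂ) * g₂ x + u₂ x / 2)
          + (starRingEnd ℂ) (u₂ x) * ((x : ℂ) * g₁ x + u₁ x / 2)).re)

/-- Infimum of the quadratic form of `Q(α,β)` over normalized even (`par = true`)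
resp. odd (`par = false`) vectors in the form domain. -/
noncomputable def Epar (α β : ℝ) (par : Bool) : ℝ :=
  sInf {r : ℝ | ∃ u₁ u₂ g₁ g₂ : ℝ → ℂ, FormPair u₁ g₁ ∧ FormPair u₂ g₂ ∧
    (∀ x, u₁ (-x) = if par then u₁ x else -u₁ x) ∧
    (∀ x, u₂ (-x) = if par then u₂ x else -u₂ x) ∧
    (∫ x : ℝ, (‖u₁ x‖ ^ 2 + ‖u₂ x‖ ^ 2)) = 1 ∧
    r = Qform α β u₁ u₂ g₁ g₂}

open Filter

/-! ### Auxiliary lemmas about `reflect` -/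

lemma norm_reflect (f : ℝ → ℂ) (x : ℝ) : ‖reflect f x‖ = ‖f x‖ := by
  unfold reflect; split <;> simp

lemma aesm_reflect {f : ℝ → ℂ} (hf : AEStronglyMeasurable f volume) :
    AEStronglyMeasurable (reflect f) volume := by
  have h : reflect f = fun x => (if 0 ≤ x then (1:ℂ) else -1) * f x := by
    funext x; unfold reflect; split <;> ring
  rw [h]
  exact ((Measurable.ite measurableSet_Ici measurable_const
    measurable_const).aestronglyMeasurable).mul hf

lemma memℒp_reflect {f : ℝ → ℂ} (hf : MemLp f 2 (volume : Measure ℝ)) :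
    MemLp (reflect f) 2 volume := by
  refine ⟨aesm_reflect hf.1, ?_⟩
  rw [eLpNorm_congr_norm_ae (Eventually.of_forall fun x => norm_reflect f x)]
  exact hf.2

lemma reflect_even {u : ℝ → ℂ} (hodd : ∀ x, u (-x) = -u x) (x : ℝ) :
    reflect u (-x) = reflect u x := by
  rcases lt_trichotomy x 0 with hx | hx | hx
  · have h1 : ¬ (0:ℝ) ≤ x := not_le.2 hx
    have h2 : (0:ℝ) ≤ -x := by linarith
    simp [reflect, h1, h2, hodd x]
  · subst hx; simp [reflect]
  · have h1 : (0:ℝ) ≤ x := hx.le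
    have h2 : ¬ (0:ℝ) ≤ -x := not_le.2 (by linarith)
    simp [reflect, h1, h2, hodd x]

lemma odd_zero {u : ℝ → ℂ} (hodd : ∀ x, u (-x) = -u x) : u 0 = 0 := by
  have := hodd 0
  rw [neg_zero] at this
  linear_combination this / 2

lemma formPair_reflect {u g : ℝ → ℂ} (h : FormPair u g) (hodd : ∀ x, u (-x) = -u x) :
    FormPair (reflect u) (reflect g) := by
  obtain ⟨hu, hg, hxu, hFC⟩ := h
  have hu0 : u 0 = 0 := odd_zero hodd
  refine ⟨memℒp_reflect hu, memℒp_reflect hg, ?_, ?_⟩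
  · have h : (fun x : ℝ => (x:ℂ) * reflect u x) = reflect (fun x : ℝ => (x:ℂ) * u x) := by
      funext x; unfold reflect; split <;> ring
    rw [h]; exact memℒp_reflect hxu
  · intro x
    have hr0 : reflect u 0 = u 0 := by simp [reflect]
    rcases le_or_gt 0 x with hx | hx
    · have h1 : reflect u x = u x := by simp [reflect, hx]
      have h2 : ∫ t in (0:ℝ)..x, reflect g t = ∫ t in (0:ℝ)..x, g t := by
        refine intervalIntegral.integral_congr fun t ht => ?_
        rw [Set.uIcc_of_le hx] at ht
        simp [reflect, ht.1]
      rw [h1, hr0, h2]; exact hFC x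
    · have h1 : reflect u x = -u x := by simp [reflect, not_le.2 hx]
      have h2 : ∫ t in (0:ℝ)..x, reflect g t = ∫ t in (0:ℝ)..x, (-g t) := by
        refine intervalIntegral.integral_congr_ae ?_
        have h0 : ∀ᵐ t : ℝ, t ≠ (0:ℝ) := by
          rw [ae_iff]
          simpa using Real.volume_singleton (x := (0:ℝ))
        filter_upwards [h0] with t ht hmem
        have hI : Set.uIoc (0:ℝ) x = Set.Ioc x 0 := by
          rw [Set.uIoc_comm, Set.uIoc_of_le hx.le]
        rw [hI] at hmem
        have : ¬ (0:ℝ) ≤ t := not_le.2 (lt_of_le_of_ne hmem.2 ht)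
        simp [reflect, this]
      have h3 := hFC x
      rw [hu0, zero_add] at h3
      rw [h1, hr0, hu0, h2, intervalIntegral.integral_neg, ← h3]
      ring

/-! ### The quadratic form under reflection, and its positivity -/

lemma qform_reflect (α β : ℝ) (u₁ u₂ g₁ g₂ : ℝ → ℂ) :
    Qform α β (reflect u₁) (reflect u₂) (reflect g₁) (reflect g₂) = Qform α β u₁ u₂ g₁ g₂ := by
  unfold Qform
  congr 1
  funext x
  by_cases hx : 0 ≤ x
  · simp [reflect, hx]
  · have h : (-((starRingEnd ℂ) (-u₁ x)) * ((x:ℂ) * (-g₂ x) + (-u₂ x)/2)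
        + (starRingEnd ℂ) (-u₂ x) * ((x:ℂ) * (-g₁ x) + (-u₁ x)/2))
      = (-((starRingEnd ℂ) (u₁ x)) * ((x:ℂ) * g₂ x + u₂ x/2)
        + (starRingEnd ℂ) (u₂ x) * ((x:ℂ) * g₁ x + u₁ x/2)) := by
      simp only [map_neg]; ring
    simp only [reflect, if_neg hx, norm_neg, h]

lemma half_bound {α β p q : ℝ} (hα : 0 < α) (hβ : 0 < β) (hαβ : 1 ≤ α * β) :
    0 ≤ α/2 * p^2 + β/2 * q^2 + p*q := by
  nlinarith [sq_nonneg (α*p+q), mul_nonneg (sub_nonneg.2 hαβ) (sq_nonneg q),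
    sq_nonneg q, sq_nonneg p, mul_pos hα hβ]

lemma qform_integrand_nonneg {α β : ℝ} (hα : 0 < α) (hβ : 0 < β) (hαβ : 1 ≤ α * β)
    (u₁ u₂ g₁ g₂ : ℝ → ℂ) (x : ℝ) :
    0 ≤ α * ((1/2) * ‖g₁ x‖ ^ 2 + (1/2) * x ^ 2 * ‖u₁ x‖ ^ 2)
      + β * ((1/2) * ‖g₂ x‖ ^ 2 + (1/2) * x ^ 2 * ‖u₂ x‖ ^ 2)
      + (-((starRingEnd ℂ) (u₁ x)) * ((x : ℂ) * g₂ x + u₂ x / 2)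
          + (starRingEnd ℂ) (u₂ x) * ((x : ℂ) * g₁ x + u₁ x / 2)).re := by
  have hαβ' : 1 ≤ β * α := by rwa [mul_comm]
  have I1 := half_bound (p := (g₁ x).re) (q := x * (u₂ x).re) hα hβ hαβ
  have I2 := half_bound (p := (g₁ x).im) (q := x * (u₂ x).im) hα hβ hαβ
  have I3 := half_bound (p := (g₂ x).re) (q := -(x * (u₁ x).re)) hβ hα hαβ'
  have I4 := half_bound (p := (g₂ x).im) (q := -(x * (u₁ x).im)) hβ hα hαβ'
  simp only [Complex.add_re, Complex.neg_re, Complex.mul_re, Complex.div_re,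
    Complex.conj_re, Complex.conj_im, Complex.ofReal_re, Complex.ofReal_im,
    Complex.sq_norm, Complex.normSq_apply, Complex.add_im,
    Complex.mul_im, Complex.div_im, Complex.re_ofNat, Complex.im_ofNat, map_neg,
    Complex.neg_im]
  norm_num
  nlinarith [I1, I2, I3, I4]

lemma qform_nonneg {α β : ℝ} (hα : 0 < α) (hβ : 0 < β) (hαβ : 1 ≤ α * β)
    (u₁ u₂ g₁ g₂ : ℝ → ℂ) : 0 ≤ Qform α β u₁ u₂ g₁ g₂ :=
  integral_nonneg fun x => qform_integrand_nonneg hα hβ hαβ u₁ u₂ g₁ g₂ x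

/-! ### An explicit normalized odd element of the form domain -/

noncomputable def G : ℝ → ℝ := fun x => Real.exp (-(1/2) * x ^ 2)

lemma hasDerivG (x : ℝ) : HasDerivAt G (-x * G x) x := by
  have h1 : HasDerivAt (fun x : ℝ => -(1/2) * x ^ 2) (-(1/2) * (2 * x ^ 1)) x :=
    (hasDerivAt_pow 2 x).const_mul _
  have := h1.exp
  convert this using 1
  · rfl
  · unfold G
    ring

lemma hasDerivXG (x : ℝ) : HasDerivAt (fun x : ℝ => x * G x) ((1 - x ^ 2) * G x) x := by
  have := (hasDerivAt_id x).mul (hasDerivG x)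
  refine this.congr_deriv ?_
  simp only [id]; ring

lemma contG : Continuous G := Real.continuous_exp.comp (by continuity)

lemma sqG (x : ℝ) : G x * G x = Real.exp (-1 * x ^ 2) := by
  rw [G, ← Real.exp_add]; ring_nf

lemma int_rpow_exp (s : ℝ) (hs : -1 < s) :
    Integrable (fun x : ℝ => x ^ s * Real.exp (-1 * x ^ 2)) :=
  integrable_rpow_mul_exp_neg_mul_sq one_pos hs

lemma int_x2 : Integrable (fun x : ℝ => x ^ 2 * Real.exp (-1 * x ^ 2)) := by
  refine (int_rpow_exp 2 (by norm_num)).congr (Eventually.of_forall fun x => ?_)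
  show x ^ (2:ℝ) * Real.exp (-1 * x ^ 2) = x ^ (2:ℕ) * Real.exp (-1 * x ^ 2)
  rw [show ((2:ℝ)) = ((2:ℕ) : ℝ) by norm_num, Real.rpow_natCast]

lemma int_x4 : Integrable (fun x : ℝ => x ^ 4 * Real.exp (-1 * x ^ 2)) := by
  refine (int_rpow_exp 4 (by norm_num)).congr (Eventually.of_forall fun x => ?_)
  show x ^ (4:ℝ) * Real.exp (-1 * x ^ 2) = x ^ (4:ℕ) * Real.exp (-1 * x ^ 2)
  rw [show ((4:ℝ)) = ((4:ℕ) : ℝ) by norm_num, Real.rpow_natCast]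

lemma int_x0 : Integrable (fun x : ℝ => Real.exp (-1 * x ^ 2)) :=
  integrable_exp_neg_mul_sq one_pos

noncomputable def U : ℝ → ℂ := fun x => ((x * G x : ℝ) : ℂ)
noncomputable def Gd : ℝ → ℂ := fun x => (((1 - x ^ 2) * G x : ℝ) : ℂ)

lemma contU : Continuous U := Complex.continuous_ofReal.comp (continuous_id.mul contG)
lemma contGd : Continuous Gd :=
  Complex.continuous_ofReal.comp ((continuous_const.sub (continuous_pow 2)).mul contG)

lemma memU : MemLp U 2 (volume : Measure ℝ) := by
  rw [memLp_two_iff_integrable_sq_norm contU.aestronglyMeasurable]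
  refine int_x2.congr (Eventually.of_forall fun x => ?_)
  simp only [U, Complex.norm_real, Real.norm_eq_abs, sq_abs]
  rw [← sqG]; ring

lemma memGd : MemLp Gd 2 (volume : Measure ℝ) := by
  rw [memLp_two_iff_integrable_sq_norm contGd.aestronglyMeasurable]
  have h : Integrable (fun x : ℝ => Real.exp (-1*x^2) - 2 * (x^2 * Real.exp (-1*x^2))
      + x^4 * Real.exp (-1*x^2)) := (int_x0.sub (int_x2.const_mul 2)).add int_x4
  refine h.congr (Eventually.of_forall fun x => ?_)
  simp only [Gd, Complex.norm_real, Real.norm_eq_abs, sq_abs]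
  rw [← sqG]; ring

lemma memXU : MemLp (fun x : ℝ => (x : ℂ) * U x) 2 (volume : Measure ℝ) := by
  have hc : Continuous (fun x : ℝ => (x : ℂ) * U x) := Complex.continuous_ofReal.mul contU
  rw [memLp_two_iff_integrable_sq_norm hc.aestronglyMeasurable]
  refine int_x4.congr (Eventually.of_forall fun x => ?_)
  simp only [U, norm_mul, Complex.norm_real, Real.norm_eq_abs, mul_pow, sq_abs]
  rw [← sqG]; ring

lemma fcU : ∀ x : ℝ, U x = U 0 + ∫ t in (0:ℝ)..x, Gd t := by
  intro x
  have hFTC : ∫ t in (0:ℝ)..x, (1 - t ^ 2) * G t = x * G x - 0 * G 0 :=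
    intervalIntegral.integral_eq_sub_of_hasDerivAt (fun t _ => hasDerivXG t)
      (((continuous_const.sub (continuous_pow 2)).mul contG).intervalIntegrable 0 x)
  have h2 : ∫ t in (0:ℝ)..x, Gd t = (((∫ t in (0:ℝ)..x, (1 - t ^ 2) * G t : ℝ)) : ℂ) :=
    intervalIntegral.integral_ofReal
  rw [h2, hFTC]
  simp [U]

lemma oddU : ∀ x : ℝ, U (-x) = -U x := by
  intro x
  simp only [U, G, neg_sq]
  push_cast
  ring

lemma posU : 0 < ∫ x : ℝ, ‖U x‖ ^ 2 := by
  have hi : Integrable (fun x : ℝ => ‖U x‖ ^ 2) :=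
    (memLp_two_iff_integrable_sq_norm contU.aestronglyMeasurable).mp memU
  rw [integral_pos_iff_support_of_nonneg (fun x => by positivity) hi]
  have hsub : Set.Ioi (0:ℝ) ⊆ Function.support fun x => ‖U x‖ ^ 2 := by
    intro x hx
    have hx0 : 0 < x := hx
    have hGx : 0 < G x := Real.exp_pos _
    have hne : U x ≠ 0 := by
      simp only [U, ne_eq, Complex.ofReal_eq_zero]
      exact ne_of_gt (mul_pos hx0 hGx)
    simp [Function.mem_support, hne]
  calc (0:ENNReal) < volume (Set.Ioi (0:ℝ)) := by simp [Real.volume_Ioi]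
    _ ≤ _ := measure_mono hsub

/-! ### The comparison of parity ground-state energies -/

lemma formPair_zero : FormPair (fun _ : ℝ => (0:ℂ)) (fun _ : ℝ => (0:ℂ)) := by
  refine ⟨MemLp.zero', MemLp.zero', ?_, ?_⟩
  · simpa using (MemLp.zero' : MemLp (fun _ : ℝ => (0:ℂ)) 2 volume)
  · intro x; simp

lemma formPair_smul {u g : ℝ → ℂ} (c : ℂ) (h : FormPair u g) :
    FormPair (fun x => c * u x) (fun x => c * g x) := by
  obtain ⟨hu, hg, hxu, hFC⟩ := h
  refine ⟨hu.const_mul c, hg.const_mul c, ?_, ?_⟩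
  · have : (fun x : ℝ => (x:ℂ) * (c * u x)) = fun x : ℝ => c * ((x:ℂ) * u x) := by
      funext x; ring
    rw [this]; exact hxu.const_mul c
  · intro x
    rw [intervalIntegral.integral_const_mul, ← mul_add, ← hFC x]

lemma odd_nonempty {α β : ℝ} : Set.Nonempty {r : ℝ | ∃ u₁ u₂ g₁ g₂ : ℝ → ℂ,
    FormPair u₁ g₁ ∧ FormPair u₂ g₂ ∧
    (∀ x, u₁ (-x) = if (false : Bool) then u₁ x else -u₁ x) ∧
    (∀ x, u₂ (-x) = if (false : Bool) then u₂ x else -u₂ x) ∧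
    (∫ x : ℝ, (‖u₁ x‖ ^ 2 + ‖u₂ x‖ ^ 2)) = 1 ∧
    r = Qform α β u₁ u₂ g₁ g₂} := by
  set N : ℝ := ∫ x : ℝ, ‖U x‖ ^ 2 with hN
  have hNpos : 0 < N := posU
  set c : ℝ := (Real.sqrt N)⁻¹ with hc
  have hfp : FormPair (fun x => (c:ℂ) * U x) (fun x => (c:ℂ) * Gd x) :=
    formPair_smul _ ⟨memU, memGd, memXU, fcU⟩
  refine ⟨Qform α β (fun x => (c:ℂ) * U x) (fun _ => 0) (fun x => (c:ℂ) * Gd x) (fun _ => 0),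
    (fun x => (c:ℂ) * U x), (fun _ => 0), (fun x => (c:ℂ) * Gd x), (fun _ => 0),
    hfp, formPair_zero, ?_, by simp, ?_, rfl⟩
  · intro x
    simp only [Bool.false_eq_true, if_false, oddU x]
    ring
  · have hptw : (fun x : ℝ => ‖(c:ℂ) * U x‖ ^ 2 + ‖(0:ℂ)‖ ^ 2)
        = fun x : ℝ => c ^ 2 * ‖U x‖ ^ 2 := by
      funext x
      simp [norm_mul, Complex.norm_real, mul_pow, sq_abs]
    rw [hptw, integral_const_mul, ← hN]
    rw [hc, ← Real.sqrt_inv]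
    rw [Real.sq_sqrt (by positivity)]
    field_simp

lemma epar_le {α β : ℝ} (hα : 0 < α) (hβ : 0 < β) (hαβ : 1 ≤ α * β) :
    Epar α β true ≤ Epar α β false := by
  apply csInf_le_csInf
  · exact ⟨0, fun r hr => by
      obtain ⟨u₁, u₂, g₁, g₂, _, _, _, _, _, hr⟩ := hr
      rw [hr]; exact qform_nonneg hα hβ hαβ u₁ u₂ g₁ g₂⟩
  · exact odd_nonempty
  · rintro r ⟨u₁, u₂, g₁, g₂, h1, h2, hp1, hp2, hn, hr⟩
    simp only [Bool.false_eq_true, if_false] at hp1 hp2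
    refine ⟨reflect u₁, reflect u₂, reflect g₁, reflect g₂,
      formPair_reflect h1 hp1, formPair_reflect h2 hp2, ?_, ?_, ?_, ?_⟩
    · intro x; simp only [if_true]; exact reflect_even hp1 x
    · intro x; simp only [if_true]; exact reflect_even hp2 x
    · simp only [norm_reflect]; exact hn
    · rw [hr, qform_reflect]

/-! ### Membership of smooth odd eigenvectors in the form domain -/

lemma memℒp_of_xmul {h : ℝ → ℂ} (hc : Continuous h)
    (hx : MemLp (fun x : ℝ => (x : ℂ) * h x) 2 (volume : Measure ℝ)) :
    MemLp h 2 (volume : Measure ℝ) := by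
  obtain ⟨C, hC⟩ := (isCompact_Icc (a := (-1:ℝ)) (b := 1)).exists_bound_of_continuousOn
    hc.continuousOn
  set C' : ℝ := max C 0 with hC'
  have hC'0 : 0 ≤ C' := le_max_right _ _
  set dom : ℝ → ℝ := fun x =>
    Set.indicator (Set.Icc (-1:ℝ) 1) (fun _ => C') x + ‖(x : ℂ) * h x‖ with hdom
  have hdommem : MemLp dom 2 (volume : Measure ℝ) := by
    refine MemLp.add ?_ hx.norm
    exact memLp_indicator_const 2 measurableSet_Icc C'
      (Or.inr (by rw [Real.volume_Icc]; exact ENNReal.ofReal_ne_top))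
  refine MemLp.of_le hdommem hc.aestronglyMeasurable (Eventually.of_forall fun x => ?_)
  have hind : 0 ≤ Set.indicator (Set.Icc (-1:ℝ) 1) (fun _ => C') x :=
    Set.indicator_nonneg (fun _ _ => hC'0) x
  have hdom0 : 0 ≤ dom x := add_nonneg hind (norm_nonneg _)
  rw [Real.norm_of_nonneg hdom0]
  show ‖h x‖ ≤ Set.indicator (Set.Icc (-1:ℝ) 1) (fun _ => C') x + ‖(x : ℂ) * h x‖
  by_cases hmem : x ∈ Set.Icc (-1:ℝ) 1
  · have h1 : ‖h x‖ ≤ C' := le_trans (hC x hmem) (le_max_left _ _)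
    rw [Set.indicator_of_mem hmem]
    exact le_add_of_le_of_nonneg h1 (norm_nonneg _)
  · have hx1 : 1 < |x| := by
      rw [Set.mem_Icc] at hmem
      push_neg at hmem
      by_cases hge : -1 ≤ x
      · have := hmem hge; rw [abs_of_pos (by linarith)]; exact this
      · push_neg at hge; rw [abs_of_neg (by linarith)]; linarith
    have : ‖h x‖ ≤ ‖(x:ℂ) * h x‖ := by
      rw [norm_mul, Complex.norm_real, Real.norm_eq_abs]
      nlinarith [norm_nonneg (h x)]
    exact le_add_of_nonneg_of_le hind this

lemma memℒp_xmul_of_sq {f : ℝ → ℂ} (hc : Continuous f)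
    (hf : MemLp f 2 (volume : Measure ℝ))
    (hx2 : MemLp (fun x : ℝ => (x : ℂ) ^ 2 * f x) 2 (volume : Measure ℝ)) :
    MemLp (fun x : ℝ => (x : ℂ) * f x) 2 (volume : Measure ℝ) := by
  set dom : ℝ → ℝ := fun x => ‖f x‖ + ‖(x : ℂ) ^ 2 * f x‖ with hdom
  have hdommem : MemLp dom 2 (volume : Measure ℝ) := hf.norm.add hx2.norm
  have hcc : Continuous (fun x : ℝ => (x : ℂ) * f x) := Complex.continuous_ofReal.mul hc
  refine MemLp.of_le hdommem hcc.aestronglyMeasurable (Eventually.of_forall fun x => ?_)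
  have hdom0 : 0 ≤ dom x := add_nonneg (norm_nonneg _) (norm_nonneg _)
  rw [Real.norm_of_nonneg hdom0]
  show ‖(x : ℂ) * f x‖ ≤ ‖f x‖ + ‖(x : ℂ) ^ 2 * f x‖
  rw [norm_mul, norm_mul, norm_pow, Complex.norm_real, Real.norm_eq_abs]
  by_cases h1 : |x| ≤ 1
  · refine le_add_of_le_of_nonneg ?_ (mul_nonneg (by positivity) (norm_nonneg _))
    nlinarith [norm_nonneg (f x), abs_nonneg x]
  · refine le_add_of_nonneg_of_le (norm_nonneg _) ?_
    have h2 : |x| ≤ |x| ^ 2 := by nlinarith [not_le.mp h1, abs_nonneg x]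
    exact mul_le_mul_of_nonneg_right h2 (norm_nonneg _)

lemma fc_of_contDiff {f : ℝ → ℂ} (hf : ContDiff ℝ 2 f) :
    ∀ x : ℝ, f x = f 0 + ∫ t in (0:ℝ)..x, deriv f t := by
  intro x
  have h : ∫ t in (0:ℝ)..x, deriv f t = f x - f 0 :=
    intervalIntegral.integral_deriv_eq_sub
      (fun t _ => (hf.differentiable two_ne_zero).differentiableAt)
      ((hf.continuous_deriv one_le_two).intervalIntegrable 0 x)
  rw [h]; ring

/-- The reflection of an odd eigenvector of `Q(α,β)` stays in the form domain, has
the same norm and the same quadratic form value; consequently `E₊ ≤ E₋`. -/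
theorem reflection_of_odd_eigenvector (α β : ℝ) (hα : 0 < α) (hβ : 0 < β)
    (hαβ : 1 < α * β) (lam : ℝ) (Φ₁ Φ₂ : ℝ → ℂ)
    (hC1 : ContDiff ℝ 2 Φ₁) (hC2 : ContDiff ℝ 2 Φ₂)
    (hL1 : MemLp Φ₁ 2 (volume : Measure ℝ)) (hL2 : MemLp Φ₂ 2 (volume : Measure ℝ))
    (hx1 : MemLp (fun x : ℝ => (x : ℂ) ^ 2 * Φ₁ x) 2 (volume : Measure ℝ))
    (hx2 : MemLp (fun x : ℝ => (x : ℂ) ^ 2 * Φ₂ x) 2 (volume : Measure ℝ))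
    (hd1 : MemLp (deriv (deriv Φ₁)) 2 (volume : Measure ℝ))
    (hd2 : MemLp (deriv (deriv Φ₂)) 2 (volume : Measure ℝ))
    (hodd1 : ∀ x, Φ₁ (-x) = -Φ₁ x) (hodd2 : ∀ x, Φ₂ (-x) = -Φ₂ x)
    (heig : Qact α β (Φ₁, Φ₂) = ((lam : ℂ)) • (Φ₁, Φ₂)) :
    FormPair (reflect Φ₁) (reflect (deriv Φ₁)) ∧
    FormPair (reflect Φ₂) (reflect (deriv Φ₂)) ∧
    (∫ x : ℝ, (‖reflect Φ₁ x‖ ^ 2 + ‖reflect Φ₂ x‖ ^ 2))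
      = (∫ x : ℝ, (‖Φ₁ x‖ ^ 2 + ‖Φ₂ x‖ ^ 2)) ∧
    Qform α β (reflect Φ₁) (reflect Φ₂) (reflect (deriv Φ₁)) (reflect (deriv Φ₂))
      = Qform α β Φ₁ Φ₂ (deriv Φ₁) (deriv Φ₂) ∧
    Epar α β true ≤ Epar α β false := by
  -- pointwise form of the eigenvalue equation
  have e1 : ∀ x : ℝ, (α : ℂ) * (-(1/2) * deriv (deriv Φ₁) x + (1/2) * (x : ℂ) ^ 2 * Φ₁ x)
      - ((x : ℂ) * deriv Φ₂ x + (1/2) * Φ₂ x) = (lam : ℂ) * Φ₁ x := by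
    intro x
    have := congrFun (congrArg Prod.fst heig) x
    simpa [Qact, Prod.smul_fst, Pi.smul_apply, smul_eq_mul] using this
  have e2 : ∀ x : ℝ, (β : ℂ) * (-(1/2) * deriv (deriv Φ₂) x + (1/2) * (x : ℂ) ^ 2 * Φ₂ x)
      + ((x : ℂ) * deriv Φ₁ x + (1/2) * Φ₁ x) = (lam : ℂ) * Φ₂ x := by
    intro x
    have := congrFun (congrArg Prod.snd heig) x
    simpa [Qact, Prod.smul_snd, Pi.smul_apply, smul_eq_mul] using this
  -- `x·Φⱼ'` is square-integrable
  have hxd2 : MemLp (fun x : ℝ => (x : ℂ) * deriv Φ₂ x) 2 (volume : Measure ℝ) := by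
    have hfun : (fun x : ℝ => (x : ℂ) * deriv Φ₂ x)
        = fun x : ℝ => (-(α/2) : ℂ) * deriv (deriv Φ₁) x
          + ((α/2) : ℂ) * ((x : ℂ) ^ 2 * Φ₁ x)
          + (-(1/2) : ℂ) * Φ₂ x + (-(lam : ℂ)) * Φ₁ x := by
      funext x
      have := e1 x
      push_cast at this ⊢
      linear_combination -this
    rw [hfun]
    exact (((hd1.const_mul _).add (hx1.const_mul _)).add (hL2.const_mul _)).add
      (hL1.const_mul _)
  have hxd1 : MemLp (fun x : ℝ => (x : ℂ) * deriv Φ₁ x) 2 (volume : Measure ℝ) := by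
    have hfun : (fun x : ℝ => (x : ℂ) * deriv Φ₁ x)
        = fun x : ℝ => ((β/2) : ℂ) * deriv (deriv Φ₂) x
          + (-(β/2) : ℂ) * ((x : ℂ) ^ 2 * Φ₂ x)
          + (-(1/2) : ℂ) * Φ₁ x + ((lam : ℂ)) * Φ₂ x := by
      funext x
      have := e2 x
      push_cast at this ⊢
      linear_combination this
    rw [hfun]
    exact (((hd2.const_mul _).add (hx2.const_mul _)).add (hL1.const_mul _)).add
      (hL2.const_mul _)
  -- `Φⱼ'` is square-integrable
  have hmd1 : MemLp (deriv Φ₁) 2 (volume : Measure ℝ) :=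
    memℒp_of_xmul (hC1.continuous_deriv one_le_two) hxd1
  have hmd2 : MemLp (deriv Φ₂) 2 (volume : Measure ℝ) :=
    memℒp_of_xmul (hC2.continuous_deriv one_le_two) hxd2
  have hfp1 : FormPair Φ₁ (deriv Φ₁) :=
    ⟨hL1, hmd1, memℒp_xmul_of_sq hC1.continuous hL1 hx1, fc_of_contDiff hC1⟩
  have hfp2 : FormPair Φ₂ (deriv Φ₂) :=
    ⟨hL2, hmd2, memℒp_xmul_of_sq hC2.continuous hL2 hx2, fc_of_contDiff hC2⟩
  refine ⟨formPair_reflect hfp1 hodd1, formPair_reflect hfp2 hodd2, ?_,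
    qform_reflect α β Φ₁ Φ₂ (deriv Φ₁) (deriv Φ₂), epar_le hα hβ hαβ.le⟩
  simp only [norm_reflect]
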